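/- Let $K$ be a field, let $B = K[X,Y,Z]$ be the polynomial ring in three variables, and let $A = K[XZ, YZ] \subseteq B$ be the $K$-subalgebra generated by $XZ$ and $YZ$. The ideal $ZB$ of $B$ is prime and its contraction to $A$ is the prime ideal of $A$ generated by $XZ$ and $YZ$, but there is no prime ideal $\mathfrak{q} \subseteq ZB$ of $B$ whose contraction to $A$ is the ideal of $A$ generated by $XZ$. In particular, the inclusion $A \subseteq B$ does not satisfy going down. -/

import Mathlib

open MvPolynomial

private lemma primeX14 (K : Type*) [Field K] (i : Fin 3) :
    Prime (X i : MvPolynomial (Fin 3) K) := by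
  rw [← MulEquiv.prime_iff ((renameEquiv K (Equiv.swap i 0)).trans (finSuccEquiv K 2)).toMulEquiv]
  have h1 : ((renameEquiv K (Equiv.swap i 0)).trans (finSuccEquiv K 2)) (X i) = Polynomial.X := by
    simp [Equiv.swap_apply_left, finSuccEquiv_X_zero]
  rw [show ((renameEquiv K (Equiv.swap i 0)).trans (finSuccEquiv K 2)).toMulEquiv (X i)
      = ((renameEquiv K (Equiv.swap i 0)).trans (finSuccEquiv K 2)) (X i) from rfl, h1]
  exact Polynomial.prime_X

/-- the algebra endomorphism of `K[x,y,z]` killing `x` -/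
private noncomputable def kill0 (K : Type*) [Field K] :
    MvPolynomial (Fin 3) K →ₐ[K] MvPolynomial (Fin 3) K :=
  aeval (fun i => if i = 0 then 0 else X i)

/-- the algebra endomorphism of `K[x,y,z]` killing `z` -/
private noncomputable def kill2 (K : Type*) [Field K] :
    MvPolynomial (Fin 3) K →ₐ[K] MvPolynomial (Fin 3) K :=
  aeval (fun i => if i = 2 then 0 else X i)

private lemma kill0_X0 (K : Type*) [Field K] : kill0 K (X 0) = 0 := by simp [kill0]
private lemma kill0_X1 (K : Type*) [Field K] : kill0 K (X 1) = X 1 := by simp [kill0]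
private lemma kill0_X2 (K : Type*) [Field K] : kill0 K (X 2) = X 2 := by simp [kill0]
private lemma kill2_X0 (K : Type*) [Field K] : kill2 K (X 0) = X 0 := by simp [kill2]
private lemma kill2_X2 (K : Type*) [Field K] : kill2 K (X 2) = 0 := by simp [kill2]

private lemma notdvd14 (K : Type*) [Field K] :
    ¬ ((X 0 * X 2 : MvPolynomial (Fin 3) K) ∣ X 1 * X 2) := by
  rintro ⟨b, hb⟩
  apply_fun kill0 K at hb
  rw [map_mul, map_mul, map_mul, kill0_X0, kill0_X1, kill0_X2, zero_mul, zero_mul] at hb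
  exact mul_ne_zero (X_ne_zero _) (X_ne_zero _) hb

set_option synthInstance.maxHeartbeats 2000000 in
set_option maxHeartbeats 2000000 in
/-- `ZB` is prime, contracts to `(XZ, YZ) ⊆ A`, but no prime `q ⊆ ZB`
contracts to `(XZ) ⊆ A`; in particular `A ⊆ B` does not satisfy going down. -/
theorem stmt_14 (K : Type*) [Field K]
    (A : Subalgebra K (MvPolynomial (Fin 3) K))
    (hA : A = Algebra.adjoin K ({X 0 * X 2, X 1 * X 2} : Set (MvPolynomial (Fin 3) K)))
    (u v : A) (hu : (u : MvPolynomial (Fin 3) K) = X 0 * X 2)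
    (hv : (v : MvPolynomial (Fin 3) K) = X 1 * X 2) :
    (Ideal.span {X 2} : Ideal (MvPolynomial (Fin 3) K)).IsPrime ∧
    Ideal.comap (algebraMap A (MvPolynomial (Fin 3) K))
        (Ideal.span {X 2} : Ideal (MvPolynomial (Fin 3) K)) = Ideal.span {u, v} ∧
    (¬ ∃ q : Ideal (MvPolynomial (Fin 3) K), q.IsPrime ∧
        q ≤ Ideal.span {X 2} ∧
        Ideal.comap (algebraMap A (MvPolynomial (Fin 3) K)) q = Ideal.span {u}) ∧
    (¬ ∀ (p p' : Ideal A), p.IsPrime → p'.IsPrime → p < p' →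
        ∀ q' : Ideal (MvPolynomial (Fin 3) K), q'.IsPrime →
          Ideal.comap (algebraMap A (MvPolynomial (Fin 3) K)) q' = p' →
          ∃ q : Ideal (MvPolynomial (Fin 3) K), q.IsPrime ∧ q ≤ q' ∧
            Ideal.comap (algebraMap A (MvPolynomial (Fin 3) K)) q = p) := by
  -- basic coercion fact
  have hcoe : ∀ a : A, algebraMap A (MvPolynomial (Fin 3) K) a = (a : MvPolynomial (Fin 3) K) :=
    fun _ => rfl
  have hvalinj : Function.Injective (fun a : A => (a : MvPolynomial (Fin 3) K)) :=
    Subtype.val_injective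
  -- primality of the variable ideals
  have hprimeZ : (Ideal.span {X 2} : Ideal (MvPolynomial (Fin 3) K)).IsPrime :=
    (Ideal.span_singleton_prime (X_ne_zero _)).2 (primeX14 K 2)
  have hprimeX : (Ideal.span {X 0} : Ideal (MvPolynomial (Fin 3) K)).IsPrime :=
    (Ideal.span_singleton_prime (X_ne_zero _)).2 (primeX14 K 0)
  -- u, v in the contraction of (z)
  have huz : algebraMap A (MvPolynomial (Fin 3) K) u
      ∈ (Ideal.span {X 2} : Ideal (MvPolynomial (Fin 3) K)) := by
    rw [hcoe, hu]; exact Ideal.mem_span_singleton.2 ⟨X 0, by ring⟩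
  have hvz : algebraMap A (MvPolynomial (Fin 3) K) v
      ∈ (Ideal.span {X 2} : Ideal (MvPolynomial (Fin 3) K)) := by
    rw [hcoe, hv]; exact Ideal.mem_span_singleton.2 ⟨X 1, by ring⟩
  have hux : algebraMap A (MvPolynomial (Fin 3) K) u
      ∈ (Ideal.span {X 0} : Ideal (MvPolynomial (Fin 3) K)) := by
    rw [hcoe, hu]; exact Ideal.mem_span_singleton.2 ⟨X 2, by ring⟩
  -- span{u,v} ≤ comap (z)
  have hle2 : Ideal.span {u, v} ≤
      Ideal.comap (algebraMap A (MvPolynomial (Fin 3) K))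
        (Ideal.span {X 2} : Ideal (MvPolynomial (Fin 3) K)) := by
    rw [Ideal.span_le]
    rintro w hw
    rcases hw with rfl | hw
    · exact huz
    · rcases hw with rfl
      exact hvz
  have hle1 : Ideal.span {u} ≤
      Ideal.comap (algebraMap A (MvPolynomial (Fin 3) K))
        (Ideal.span {X 0} : Ideal (MvPolynomial (Fin 3) K)) := by
    rw [Ideal.span_le]
    rintro w rfl
    exact hux
  -- v ∉ span {u}
  have hvnu : v ∉ Ideal.span {u} := by
    intro h
    rcases Ideal.mem_span_singleton.1 h with ⟨a, ha⟩
    apply notdvd14 K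
    refine ⟨(a : MvPolynomial (Fin 3) K), ?_⟩
    have := congrArg (fun w : A => (w : MvPolynomial (Fin 3) K)) ha
    simpa [hu, hv] using this
  -- decomposition lemma for the z-contraction
  have decompZ : ∀ x : MvPolynomial (Fin 3) K, x ∈ A →
      ∃ c : K, ∃ m, m ∈ Ideal.span {u, v} ∧
      x = algebraMap K (MvPolynomial (Fin 3) K) c + (m : MvPolynomial (Fin 3) K) := by
    subst hA
    intro x hx
    induction hx using Algebra.adjoin_induction with
    | mem y hy =>
      rcases hy with rfl | hy
      · exact ⟨0, u, Ideal.subset_span (Set.mem_insert _ _), by rw [hu]; simp⟩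
      · rcases hy with rfl
        exact ⟨0, v, Ideal.subset_span (Set.mem_insert_of_mem _ rfl), by rw [hv]; simp⟩
    | algebraMap r => exact ⟨r, 0, Ideal.zero_mem _, by simp⟩
    | add y z hy hz ihy ihz =>
      obtain ⟨c1, m1, hm1, h1⟩ := ihy
      obtain ⟨c2, m2, hm2, h2⟩ := ihz
      exact ⟨c1 + c2, m1 + m2, Ideal.add_mem _ hm1 hm2, by
        rw [h1, h2]; push_cast; ring⟩
    | mul y z hy hz ihy ihz =>
      obtain ⟨c1, m1, hm1, h1⟩ := ihy
      obtain ⟨c2, m2, hm2, h2⟩ := ihz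
      refine ⟨c1 * c2,
        algebraMap K _ c1 * m2 + algebraMap K _ c2 * m1 + m1 * m2,
        Ideal.add_mem _ (Ideal.add_mem _ (Ideal.mul_mem_left _ _ hm2)
          (Ideal.mul_mem_left _ _ hm1)) (Ideal.mul_mem_left _ _ hm2), ?_⟩
      rw [h1, h2]; push_cast; ring
  -- value of polynomials in v
  have hvval : ∀ p : Polynomial K, ((Polynomial.aeval v p : A) : MvPolynomial (Fin 3) K)
      = Polynomial.aeval (X 1 * X 2 : MvPolynomial (Fin 3) K) p := by
    intro p
    rw [show ((Polynomial.aeval v p : A) : MvPolynomial (Fin 3) K)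
        = A.val (Polynomial.aeval v p) from rfl, ← Polynomial.aeval_algHom_apply]
    rw [show A.val v = (v : MvPolynomial (Fin 3) K) from rfl, hv]
  -- decomposition lemma for the x-contraction
  have decompX : ∀ x : MvPolynomial (Fin 3) K, x ∈ A →
      ∃ p : Polynomial K, ∃ m, m ∈ Ideal.span {u} ∧
      x = Polynomial.aeval (X 1 * X 2 : MvPolynomial (Fin 3) K) p
        + (m : MvPolynomial (Fin 3) K) := by
    subst hA
    intro x hx
    induction hx using Algebra.adjoin_induction with
    | mem y hy =>
      rcases hy with rfl | hy
      · exact ⟨0, u, Ideal.subset_span rfl, by rw [hu]; simp⟩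
      · rcases hy with rfl
        exact ⟨Polynomial.X, 0, Ideal.zero_mem _, by simp⟩
    | algebraMap r => exact ⟨Polynomial.C r, 0, Ideal.zero_mem _, by simp⟩
    | add y z hy hz ihy ihz =>
      obtain ⟨p1, m1, hm1, h1⟩ := ihy
      obtain ⟨p2, m2, hm2, h2⟩ := ihz
      exact ⟨p1 + p2, m1 + m2, Ideal.add_mem _ hm1 hm2, by
        rw [h1, h2, map_add]; push_cast; ring⟩
    | mul y z hy hz ihy ihz =>
      obtain ⟨p1, m1, hm1, h1⟩ := ihy
      obtain ⟨p2, m2, hm2, h2⟩ := ihz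
      refine ⟨p1 * p2,
        (Polynomial.aeval v p1) * m2 + m1 * (Polynomial.aeval v p2) + m1 * m2,
        Ideal.add_mem _ (Ideal.add_mem _ (Ideal.mul_mem_left _ _ hm2)
          (Ideal.mul_mem_right _ _ hm1)) (Ideal.mul_mem_left _ _ hm2), ?_⟩
      rw [h1, h2, map_mul]
      push_cast [hvval]
      ring
  -- the z-contraction is (u,v)
  have hcontrZ : Ideal.comap (algebraMap A (MvPolynomial (Fin 3) K))
      (Ideal.span {X 2} : Ideal (MvPolynomial (Fin 3) K)) = Ideal.span {u, v} := by
    refine le_antisymm ?_ hle2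
    intro a ha
    rw [Ideal.mem_comap, hcoe] at ha
    obtain ⟨c, m, hm, hdec⟩ := decompZ (a : MvPolynomial (Fin 3) K) a.2
    have hmz : (m : MvPolynomial (Fin 3) K)
        ∈ (Ideal.span {X 2} : Ideal (MvPolynomial (Fin 3) K)) := hle2 hm
    have hc : algebraMap K (MvPolynomial (Fin 3) K) c
        ∈ (Ideal.span {X 2} : Ideal (MvPolynomial (Fin 3) K)) := by
      have h' : algebraMap K (MvPolynomial (Fin 3) K) c
          = (a : MvPolynomial (Fin 3) K) - (m : MvPolynomial (Fin 3) K) := by rw [hdec]; ring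
      rw [h']
      exact Ideal.sub_mem _ ha hmz
    rcases Ideal.mem_span_singleton.1 hc with ⟨g, hg⟩
    apply_fun kill2 K at hg
    rw [AlgHom.commutes, map_mul, kill2_X2, zero_mul] at hg
    have hc0 : c = 0 := by
      have := congrArg constantCoeff hg
      simpa using this
    have hval : (a : MvPolynomial (Fin 3) K) = (m : MvPolynomial (Fin 3) K) := by
      rw [hdec, hc0]; simp
    have ham : a = m := hvalinj hval
    rw [ham]
    exact hm
  -- the x-contraction is (u)
  have hcontrX : Ideal.comap (algebraMap A (MvPolynomial (Fin 3) K))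
      (Ideal.span {X 0} : Ideal (MvPolynomial (Fin 3) K)) = Ideal.span {u} := by
    refine le_antisymm ?_ hle1
    intro a ha
    rw [Ideal.mem_comap, hcoe] at ha
    obtain ⟨p, m, hm, hdec⟩ := decompX (a : MvPolynomial (Fin 3) K) a.2
    have hmx : (m : MvPolynomial (Fin 3) K)
        ∈ (Ideal.span {X 0} : Ideal (MvPolynomial (Fin 3) K)) := hle1 hm
    have hw : Polynomial.aeval (X 1 * X 2 : MvPolynomial (Fin 3) K) p
        ∈ (Ideal.span {X 0} : Ideal (MvPolynomial (Fin 3) K)) := by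
      have h' : Polynomial.aeval (X 1 * X 2 : MvPolynomial (Fin 3) K) p
          = (a : MvPolynomial (Fin 3) K) - (m : MvPolynomial (Fin 3) K) := by rw [hdec]; ring
      rw [h']
      exact Ideal.sub_mem _ ha hmx
    rcases Ideal.mem_span_singleton.1 hw with ⟨g, hg⟩
    apply_fun kill0 K at hg
    rw [map_mul, kill0_X0, zero_mul, ← Polynomial.aeval_algHom_apply,
      map_mul, kill0_X1, kill0_X2] at hg
    have hval : (a : MvPolynomial (Fin 3) K) = (m : MvPolynomial (Fin 3) K) := by
      rw [hdec, hg]; simp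
    have ham : a = m := hvalinj hval
    rw [ham]
    exact hm
  -- part 3 : no prime below (z) contracts to (u)
  have part3 : ¬ ∃ q : Ideal (MvPolynomial (Fin 3) K), q.IsPrime ∧
      q ≤ Ideal.span {X 2} ∧
      Ideal.comap (algebraMap A (MvPolynomial (Fin 3) K)) q = Ideal.span {u} := by
    rintro ⟨q, hq, hqz, hqc⟩
    have huq : (X 0 : MvPolynomial (Fin 3) K) * X 2 ∈ q := by
      have h' : u ∈ Ideal.comap (algebraMap A (MvPolynomial (Fin 3) K)) q := by
        rw [hqc]; exact Ideal.subset_span rfl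
      rw [Ideal.mem_comap, hcoe, hu] at h'
      exact h'
    rcases hq.mem_or_mem huq with hx | hz
    · rcases Ideal.mem_span_singleton.1 (hqz hx) with ⟨g, hg⟩
      apply_fun kill2 K at hg
      rw [map_mul, kill2_X2, zero_mul, kill2_X0] at hg
      exact X_ne_zero (0 : Fin 3) hg
    · have h' : v ∈ Ideal.comap (algebraMap A (MvPolynomial (Fin 3) K)) q := by
        rw [Ideal.mem_comap, hcoe, hv]
        exact q.mul_mem_left _ hz
      rw [hqc] at h'
      exact hvnu h'
  refine ⟨hprimeZ, hcontrZ, part3, ?_⟩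
  intro H
  have hpprime : (Ideal.span {u} : Ideal A).IsPrime := by
    rw [← hcontrX]; exact Ideal.IsPrime.comap _
  have hp'prime : (Ideal.span {u, v} : Ideal A).IsPrime := by
    rw [← hcontrZ]; exact Ideal.IsPrime.comap _
  have hlt : (Ideal.span {u} : Ideal A) < Ideal.span {u, v} := by
    refine lt_of_le_of_ne (Ideal.span_mono (Set.singleton_subset_iff.2 (Set.mem_insert _ _))) ?_
    intro h
    exact hvnu (h ▸ Ideal.subset_span (Set.mem_insert_of_mem _ rfl))
  obtain ⟨q, hq, hqle, hqc⟩ := H (Ideal.span {u}) (Ideal.span {u, v}) hpprime hp'prime hlt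
    (Ideal.span {X 2}) hprimeZ hcontrZ
  exact part3 ⟨q, hq, hqle, hqc⟩
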